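/- arXiv:1704.07165 — 6 statements merged into one kernel-verified Lean document; each statement's English description precedes it below -/
import Mathlib

section
/- Let Γ be a finite simple k-regular graph of girth g, let Υ be any simple graph of order k, and let ρ be any vertex-neighborhood labeling of Γ. Then every cycle of the generalized truncation T(Γ,ρ;Υ) that contains a blue edge has length at least 2g. -/
open SimpleGraph

variable {V W : Type*}

/-- The generalized truncation `T(Γ,ρ;Υ)` of a graph `Γ` by a graph `Υ`,
with respect to a labeling `ρ` of the darts of `Γ` by vertices of `Υ`. -/
def trunc (Γ : SimpleGraph V) (Υ : SimpleGraph W)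
    (ρ : ∀ u w : V, Γ.Adj u w → W) : SimpleGraph (V × W) where
  Adj x y := (x.1 = y.1 ∧ Υ.Adj x.2 y.2) ∨
    (∃ h : Γ.Adj x.1 y.1, x.2 = ρ x.1 y.1 h ∧ y.2 = ρ y.1 x.1 h.symm)
  symm := by
    constructor
    rintro ⟨u, i⟩ ⟨w, j⟩ (⟨h1, h2⟩ | ⟨h, h1, h2⟩)
    · exact Or.inl ⟨h1.symm, h2.symm⟩
    · exact Or.inr ⟨h.symm, h2, h1⟩
  loopless := by
    constructor
    rintro ⟨u, i⟩ (⟨_, h⟩ | ⟨h, _⟩)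
    · exact Υ.irrefl h
    · exact Γ.irrefl h

/-- `ρ` is a vertex-neighborhood labeling of `Γ`: for every vertex `u`, the restriction
of `ρ` to the darts emanating from `u` is a bijection onto the vertex set of `Υ`. -/
def IsVNLabeling (Γ : SimpleGraph V) (ρ : ∀ u w : V, Γ.Adj u w → W) : Prop :=
  ∀ u : V, ∀ i : W, ∃! w : V, ∃ h : Γ.Adj u w, ρ u w h = i

/-- A permutation of the vertices is an automorphism of the graph. -/
def IsAut (Γ : SimpleGraph V) (π : Equiv.Perm V) : Prop :=
  ∀ a b : V, Γ.Adj (π a) (π b) ↔ Γ.Adj a b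

/-- The automorphism group of a graph, as a subgroup of the symmetric group. -/
def autG (Γ : SimpleGraph V) : Subgroup (Equiv.Perm V) where
  carrier := {π | IsAut Γ π}
  one_mem' := by intro a b; rfl
  mul_mem' := by
    intro f g hf hg a b
    exact (hf (g a) (g b)).trans (hg a b)
  inv_mem' := by
    intro f hf a b
    conv_rhs => rw [← f.apply_symm_apply a, ← f.apply_symm_apply b]
    exact (hf _ _).symm

section AuxStmt0

lemma getLast_congr' {X : Type*} {l l' : List X} (h : l = l') (h1 : l ≠ []) (h2 : l' ≠ []) :
    l.getLast h1 = l'.getLast h2 := by subst h; rfl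

lemma head_congr' {X : Type*} {l l' : List X} (h : l = l') (h1 : l ≠ []) (h2 : l' ≠ []) :
    l.head h1 = l'.head h2 := by subst h; rfl

theorem countP_le_half_aux {X : Type*} (P : X → Bool) :
    ∀ l : List X, List.Chain' (fun a b => ¬(P a = true ∧ P b = true)) l →
      (∀ h : l ≠ [], P (l.head h) = false) → 2 * l.countP P ≤ l.length
  | [], _, _ => by simp
  | [a], _, hh => by
    have := hh (by simp)
    simp at this
    simp [List.countP_cons, this]
  | a :: b :: t, hch, hh => by
    have ha : P a = false := by simpa using hh (by simp)
    have hch' : List.Chain' (fun a b => ¬(P a = true ∧ P b = true)) (b :: t) := hch.tail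
    by_cases hb : P b = true
    · have hht : ∀ h : t ≠ [], P (t.head h) = false := by
        intro hne
        match t, hne with
        | c :: t', _ =>
          have := (List.isChain_cons_cons.1 hch').1
          simp only [hb, true_and] at this
          simpa using this
      have := countP_le_half_aux P t hch'.tail hht
      have e1 : (a :: b :: t).countP P = t.countP P + 1 := by
        simp [List.countP_cons, ha, hb]
      rw [e1]
      simp only [List.length_cons]
      omega
    · have := countP_le_half_aux P (b :: t) hch' (fun _ => by simpa using hb)
      have e1 : (a :: b :: t).countP P = (b :: t).countP P := by
        simp [List.countP_cons, ha]
      rw [e1]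
      simp only [List.length_cons] at this ⊢
      omega

theorem countP_le_half_cyclic {X : Type*} (P : X → Bool) (l : List X) (hne : l ≠ [])
    (hch : List.Chain' (fun a b => ¬(P a = true ∧ P b = true)) l)
    (hfl : ¬(P (l.head hne) = true ∧ P (l.getLast hne) = true)) :
    2 * l.countP P ≤ l.length := by
  by_cases hhead : P (l.head hne) = true
  · have hlast : P (l.getLast hne) = false := by
      by_contra hcon
      exact hfl ⟨hhead, by simpa using hcon⟩
    have h1 : 2 * l.reverse.countP P ≤ l.reverse.length := by
      apply countP_le_half_aux P l.reverse
      · refine List.isChain_reverse.2 ?_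
        exact hch.imp (fun a b h => fun ⟨x, y⟩ => h ⟨y, x⟩)
      · intro h
        rw [List.head_reverse]
        exact hlast
    simpa using h1
  · apply countP_le_half_aux P l hch
    intro h
    simpa using hhead

/-- A nonempty closed trail contains a cycle of no greater length. -/
lemma exists_cycle_of_closed_trail [DecidableEq V] {G : SimpleGraph V} :
    ∀ (n : ℕ) (u : V) (p : G.Walk u u), p.length ≤ n → p.IsTrail → p ≠ SimpleGraph.Walk.nil →
      ∃ (v : V) (q : G.Walk v v), q.IsCycle ∧ q.length ≤ p.length := by
  intro n
  induction n with
  | zero =>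
    intro u p hlen ht hne
    cases p with
    | nil => exact absurd rfl hne
    | cons h q => simp at hlen
  | succ n ih =>
    intro u p hlen ht hne
    by_cases hnd : p.support.tail.Nodup
    · exact ⟨u, p, ⟨⟨ht, hne⟩, hnd⟩, le_rfl⟩
    · cases p with
      | nil => exact absurd rfl hne
      | cons h q =>
        rename_i v
        rw [SimpleGraph.Walk.support_cons, List.tail_cons] at hnd
        obtain ⟨w, hw⟩ := List.exists_duplicate_iff_not_nodup.2 hnd
        have hw2 : 2 ≤ q.support.count w := List.duplicate_iff_two_le_count.1 hw
        have hwmem : w ∈ q.support := hw.mem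
        have hspec := q.take_spec hwmem
        have hcount1 := q.count_support_takeUntil_eq_one hwmem
        have hsup : q.support =
            (q.takeUntil w hwmem).support ++ (q.dropUntil w hwmem).support.tail := by
          conv_lhs => rw [← hspec]
          exact SimpleGraph.Walk.support_append _ _
        have hmem2 : w ∈ (q.dropUntil w hwmem).support.tail := by
          rw [hsup, List.count_append, hcount1] at hw2
          exact List.count_pos_iff.1 (by omega)
        have hdtrail : (q.dropUntil w hwmem).IsTrail := (ht.of_cons).dropUntil hwmem
        have hdlen : (q.dropUntil w hwmem).length ≤ q.length := by
          have := congrArg SimpleGraph.Walk.length hspec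
          rw [SimpleGraph.Walk.length_append] at this
          omega
        rcases hdq : q.dropUntil w hwmem with _ | ⟨h2, r⟩
        · rw [hdq] at hmem2; simp at hmem2
        · rename_i z
          rw [hdq] at hmem2 hdtrail hdlen
          have hwr : w ∈ r.support := by simpa using hmem2
          obtain ⟨htr, hnotin⟩ := (SimpleGraph.Walk.isTrail_cons _ _).1 hdtrail
          have hnew : (SimpleGraph.Walk.cons h2 (r.takeUntil w hwr)).IsTrail :=
            (SimpleGraph.Walk.isTrail_cons _ _).2
              ⟨htr.takeUntil hwr, fun hm => hnotin (r.edges_takeUntil_subset hwr hm)⟩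
          have hlen2 : (SimpleGraph.Walk.cons h2 (r.takeUntil w hwr)).length ≤ q.length := by
            have h1 := r.length_takeUntil_le hwr
            simp only [SimpleGraph.Walk.length_cons] at hdlen ⊢
            omega
          have h1 := r.length_takeUntil_le hwr
          simp only [SimpleGraph.Walk.length_cons] at hdlen hlen hlen2 ⊢
          obtain ⟨v', q', hq', hq'len⟩ := ih w (SimpleGraph.Walk.cons h2 (r.takeUntil w hwr))
            (by simp only [SimpleGraph.Walk.length_cons]; omega) hnew (by simp)
          refine ⟨v', q', hq', ?_⟩
          simp only [SimpleGraph.Walk.length_cons] at hq'len ⊢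
          omega

variable [DecidableEq V] (Γ : SimpleGraph V) (Υ : SimpleGraph W)
  (ρ : ∀ u w : V, Γ.Adj u w → W)

/-- The blue-edge predicate: an edge of the truncation is blue iff its endpoints have
distinct first components. -/
def BlueB : Sym2 (V × W) → Bool := fun e => !decide ((Sym2.map Prod.fst e).IsDiag)

lemma blueB_mk {a b : V × W} : BlueB s(a, b) = true ↔ a.1 ≠ b.1 := by
  simp [BlueB, Sym2.map_pair_eq]

/-- Projection of a walk in the truncation to a walk in `Γ`, contracting red edges. -/
def projW : ∀ {x y : V × W}, (trunc Γ Υ ρ).Walk x y → Γ.Walk x.1 y.1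
  | _, _, .nil => .nil
  | x, _, .cons (v := b) h p =>
    if heq : x.1 = b.1 then (projW p).copy heq.symm rfl
    else .cons ((h.resolve_left (fun hh => heq hh.1)).choose) (projW p)

lemma projW_edges : ∀ {x y : V × W} (p : (trunc Γ Υ ρ).Walk x y),
    (projW Γ Υ ρ p).edges = (p.edges.filter (BlueB (V := V) (W := W))).map (Sym2.map Prod.fst)
  | _, _, .nil => by simp [projW]
  | x, y, .cons (v := b) h p => by
    rw [Walk.edges_cons, List.filter_cons]
    by_cases heq : x.1 = b.1
    · have hB : BlueB s(x, b) = false := by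
        simp [BlueB, Sym2.map_pair_eq, heq]
      rw [projW, dif_pos heq, Walk.edges_copy, projW_edges p, hB]
      simp
    · have hB : BlueB s(x, b) = true := blueB_mk.2 heq
      rw [projW, dif_neg heq, Walk.edges_cons, projW_edges p, hB]
      simp [Sym2.map_pair_eq]

variable {Γ Υ ρ}

/-- Two consecutive blue edges around a common middle vertex force the outer endpoints
to coincide. -/
lemma key_lemma (hρ : IsVNLabeling Γ ρ) {a b c : V × W}
    (hab : (trunc Γ Υ ρ).Adj a b) (hbc : (trunc Γ Υ ρ).Adj b c)
    (h1 : a.1 ≠ b.1) (h2 : b.1 ≠ c.1) : a = c := by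
  obtain ⟨a1, a2⟩ := a
  obtain ⟨b1, b2⟩ := b
  obtain ⟨c1, c2⟩ := c
  simp only [ne_eq] at h1 h2
  rcases hab with ⟨h, -⟩ | ⟨h, ha, hb⟩
  · exact absurd h h1
  rcases hbc with ⟨h', -⟩ | ⟨h', hb', hc⟩
  · exact absurd h' h2
  simp only at h ha hb h' hb' hc
  have hu := hρ b1 b2
  have hac : a1 = c1 := hu.unique ⟨h.symm, hb.symm⟩ ⟨h', hb'.symm⟩
  subst hac
  exact Prod.ext rfl (ha.trans hc.symm)

/-- Blue edges of the truncation are determined by their projections to `Γ`. -/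
lemma blue_inj {e f : Sym2 (V × W)}
    (he : e ∈ (trunc Γ Υ ρ).edgeSet) (hf : f ∈ (trunc Γ Υ ρ).edgeSet)
    (hbe : BlueB e = true) (hbf : BlueB f = true)
    (heq : Sym2.map Prod.fst e = Sym2.map Prod.fst f) : e = f := by
  induction e using Sym2.ind with | _ a b => ?_
  induction f using Sym2.ind with | _ a' b' => ?_
  obtain ⟨a1, a2⟩ := a
  obtain ⟨b1, b2⟩ := b
  obtain ⟨a1', a2'⟩ := a'
  obtain ⟨b1', b2'⟩ := b'
  rw [blueB_mk] at hbe hbf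
  simp only [ne_eq] at hbe hbf
  rw [Sym2.map_pair_eq, Sym2.map_pair_eq, Sym2.eq_iff] at heq
  rcases he with ⟨h, -⟩ | ⟨h, ha, hb⟩
  · exact absurd h hbe
  rcases hf with ⟨h', -⟩ | ⟨h', ha', hb'⟩
  · exact absurd h' hbf
  simp only at h ha hb h' ha' hb' hbe hbf heq
  rcases heq with ⟨e1, e2⟩ | ⟨e1, e2⟩
  · subst e1; subst e2
    rw [show a2 = a2' from ha.trans ha'.symm, show b2 = b2' from hb.trans hb'.symm]
  · subst e1; subst e2
    rw [show a2 = b2' from ha.trans hb'.symm, show b2 = a2' from hb.trans ha'.symm]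
    exact Sym2.eq_swap

/-- No two consecutive edges of an edge-nodup walk in the truncation are both blue. -/
lemma chain_edges (hρ : IsVNLabeling Γ ρ) :
    ∀ {x y : V × W} (p : (trunc Γ Υ ρ).Walk x y), p.edges.Nodup →
      List.Chain' (fun e f => ¬(BlueB e = true ∧ BlueB f = true)) p.edges
  | _, _, .nil, _ => List.isChain_nil
  | _, _, .cons h .nil, _ => List.isChain_singleton _
  | x, y, .cons (v := b) h (.cons (v := d) h' q), hnd => by
    rw [Walk.edges_cons, Walk.edges_cons]; refine List.isChain_cons_cons.2 ?_
    constructor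
    · rintro ⟨hB1, hB2⟩
      rw [blueB_mk] at hB1 hB2
      have hxd : x = d := key_lemma hρ h h' hB1 hB2
      have : s(x, b) = s(b, d) := by rw [Sym2.eq_swap, hxd]
      rw [Walk.edges_cons, Walk.edges_cons] at hnd
      exact (List.nodup_cons.1 hnd).1 (this ▸ List.mem_cons_self)
    · have := chain_edges hρ (.cons h' q) (by
        rw [Walk.edges_cons] at hnd; exact (List.nodup_cons.1 hnd).2)
      rwa [Walk.edges_cons] at this

/-- In a cycle of the truncation, the first and last edges are not both blue. -/
lemma first_last (hρ : IsVNLabeling Γ ρ) {x : V × W} (c : (trunc Γ Υ ρ).Walk x x)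
    (hc : c.IsCycle) (hEne : c.edges ≠ []) :
    ¬(BlueB (c.edges.head hEne) = true ∧ BlueB (c.edges.getLast hEne) = true) := by
  have hnd := hc.isCircuit.isTrail.edges_nodup
  have hlen3 := hc.three_le_length
  cases c with
  | nil => simp at hEne
  | cons h p =>
    rename_i b
    rintro ⟨hB1, hB2⟩
    have hpne : p.edges ≠ [] := by
      have hl := p.length_edges
      intro hnil
      rw [hnil] at hl
      simp only [SimpleGraph.Walk.length_cons] at hlen3
      simp at hl
      omega
    have h0 : (Walk.cons h p).reverse.edges = (Walk.cons h p).edges.reverse :=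
      Walk.edges_reverse _
    rcases hr : (Walk.cons h p).reverse with _ | ⟨h2, p2⟩
    · rw [hr] at h0
      have : (Walk.cons h p).edges = [] := by
        simpa using congrArg List.reverse h0
      exact hEne this
    · rename_i b2
      rw [hr, Walk.edges_cons] at h0
      -- identify head and last
      have hhead : (Walk.cons h p).edges.head hEne = s(x, b) := by
        simp [Walk.edges_cons]
      have hrevne : (Walk.cons h p).edges.reverse ≠ [] := by simpa using hEne
      have hlast : (Walk.cons h p).edges.getLast hEne = s(x, b2) := by
        have e1 : (Walk.cons h p).edges.getLast hEne
            = (Walk.cons h p).edges.reverse.head hrevne := (List.head_reverse hrevne).symm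
        rw [e1, head_congr' h0.symm hrevne (by simp), List.head_cons]
      rw [hhead] at hB1
      rw [hlast] at hB2
      rw [blueB_mk] at hB1 hB2
      have hbb2 : b = b2 := key_lemma hρ h.symm h2 (Ne.symm hB1) hB2
      -- so the first edge equals the last edge
      have heq : (Walk.cons h p).edges.getLast hEne = s(x, b) := by
        rw [hlast, hbb2]
      have h3 : (Walk.cons h p).edges = s(x, b) :: p.edges := Walk.edges_cons _ _
      have e2 : (Walk.cons h p).edges.getLast hEne = p.edges.getLast hpne := by
        rw [getLast_congr' h3 hEne (by simp)]
        exact List.getLast_cons hpne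
      have hmem : s(x, b) ∈ p.edges := by
        rw [← heq, e2]
        exact List.getLast_mem hpne
      rw [Walk.edges_cons] at hnd
      exact (List.nodup_cons.1 hnd).1 hmem

end AuxStmt0

/-- If `Γ` is a finite simple `k`-regular graph of girth `g`, `Υ` is any
simple graph of order `k`, and `ρ` is any vertex-neighborhood labeling of `Γ`, then every
cycle of the generalized truncation `T(Γ,ρ;Υ)` containing a blue edge (an edge whose
endpoints lie in different copies of `Υ`) has length at least `2 * g`. -/
theorem stmt0 {V W : Type*} [Fintype V] [Fintype W] [DecidableEq V] [DecidableEq W]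
    {k g : ℕ} (Γ : SimpleGraph V) [DecidableRel Γ.Adj] (Υ : SimpleGraph W)
    (hreg : Γ.IsRegularOfDegree k) (hcard : Fintype.card W = k)
    (hgirth : Γ.egirth = (g : ℕ∞))
    (ρ : ∀ u w : V, Γ.Adj u w → W) (hρ : IsVNLabeling Γ ρ)
    (x : V × W) (c : (trunc Γ Υ ρ).Walk x x) (hc : c.IsCycle)
    (hblue : ∃ a b : V × W, a.1 ≠ b.1 ∧ s(a, b) ∈ c.edges) :
    2 * g ≤ c.length := by
  classical
  have hnd : c.edges.Nodup := hc.isCircuit.isTrail.edges_nodup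
  have hlen3 : 3 ≤ c.length := hc.three_le_length
  have hElen : c.edges.length = c.length := c.length_edges
  have hEne : c.edges ≠ [] := by
    intro h
    rw [h] at hElen
    simp at hElen
    omega
  -- counting: at most half the edges are blue
  have hch := chain_edges hρ c hnd
  have hfl := first_last hρ c hc hEne
  have hcount := countP_le_half_cyclic BlueB c.edges hEne hch hfl
  -- the projected walk
  set q := projW Γ Υ ρ c with hq
  have hqe := projW_edges Γ Υ ρ c
  have hqlen : q.length = c.edges.countP BlueB := by
    rw [← Walk.length_edges, hqe, List.length_map, List.countP_eq_length_filter]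
  have hqnd : q.edges.Nodup := by
    rw [hqe]
    refine List.Nodup.map_on ?_ (hnd.filter _)
    intro e he f hf heq
    obtain ⟨he1, he2⟩ := List.mem_filter.1 he
    obtain ⟨hf1, hf2⟩ := List.mem_filter.1 hf
    exact blue_inj (c.edges_subset_edgeSet he1) (c.edges_subset_edgeSet hf1) he2 hf2 heq
  have hqtrail : q.IsTrail := ⟨hqnd⟩
  have hpos : 0 < c.edges.countP BlueB := by
    obtain ⟨a, b, hab, hmem⟩ := hblue
    exact List.countP_pos_iff.2 ⟨s(a, b), hmem, blueB_mk.2 hab⟩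
  have hqne : q ≠ Walk.nil := by
    intro hnil
    rw [hnil] at hqlen
    simp at hqlen
    omega
  obtain ⟨v, w, hw, hwlen⟩ :=
    exists_cycle_of_closed_trail q.length x.1 q le_rfl hqtrail hqne
  have hg : (g : ℕ∞) ≤ (w.length : ℕ∞) := by
    rw [← hgirth]
    exact iInf_le_of_le v (iInf_le_of_le w (iInf_le _ hw))
  have hg' : g ≤ w.length := by exact_mod_cast hg
  omega
end

section
/- Let T(Γ,ρ;Υ) be a generalized truncation. The only automorphism of T(Γ,ρ;Υ) that fixes each part of the natural partition P_Γ setwise is the identity. -/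
open SimpleGraph

variable {V W : Type*}

/-- The only automorphism of a generalized truncation `T(Γ,ρ;Υ)` fixing
each part `V(Γ̃_u) = {(u, i) : i ∈ V(Υ)}` of the natural partition setwise is the identity. -/
theorem stmt1 {V W : Type*} [Fintype V] [Fintype W] [DecidableEq V] [DecidableEq W]
    {k : ℕ} (Γ : SimpleGraph V) [DecidableRel Γ.Adj] (Υ : SimpleGraph W)
    (hreg : Γ.IsRegularOfDegree k) (hcard : Fintype.card W = k)
    (ρ : ∀ u w : V, Γ.Adj u w → W) (hρ : IsVNLabeling Γ ρ)
    (π : Equiv.Perm (V × W)) (hπ : IsAut (trunc Γ Υ ρ) π)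
    (hfix : ∀ x : V × W, (π x).1 = x.1) :
    π = 1 := by
  have key : ∀ u i, π (u, i) = (u, i) := by
    intro u i
    obtain ⟨w, ⟨h, hw⟩, -⟩ := hρ u i
    obtain ⟨j, hj⟩ : ∃ j, π (u, i) = (u, j) :=
      ⟨(π (u, i)).2, Prod.ext (hfix _) rfl⟩
    obtain ⟨s, hs⟩ : ∃ s, π (w, ρ w u h.symm) = (w, s) :=
      ⟨(π (w, ρ w u h.symm)).2, Prod.ext (hfix _) rfl⟩
    have hadj : (trunc Γ Υ ρ).Adj (u, i) (w, ρ w u h.symm) :=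
      Or.inr ⟨h, hw.symm, rfl⟩
    have h2 := (hπ _ _).mpr hadj
    rw [hj, hs] at h2
    rcases h2 with ⟨heq, -⟩ | ⟨h', hj2, -⟩
    · exact absurd heq h.ne
    · rw [hj]; exact Prod.ext rfl (hj2.trans hw)
  ext ⟨u, i⟩ <;> rw [key u i] <;> rfl
end

section
/- Let Γ, G, v, O_v and T(Γ,G;O_v) be as in the construction. A subgroup K ≤ Aut(Γ) containing G lifts to Aut(T(Γ,G;O_v)) (that is, for every g ∈ K the permutation (u,w) ↦ (u^g,w^g) of the vertex set of T(Γ,G;O_v) is an automorphism of T(Γ,G;O_v)) if and only if O_v is a union of orbits of the induced action of the stabilizer K_v on the 2-element subsets of Γ(v). In particular, G itself lifts to Aut(T(Γ,G;O_v)). -/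
open SimpleGraph

variable {V : Type*}

/-- The generalized truncation `T(Γ,G;O_v)`: its vertices are the darts `(u,w)` of `Γ`;
`(u,w)` is adjacent to `(w,u)` (blue edges), and `(u,w)` is adjacent to `(u,w')` whenever
there is a `g ∈ G` with `u^g = v` and `{w^g, w'^g} ∈ O` (red edges). -/
def truncT (Γ : SimpleGraph V) (G : Set (Equiv.Perm V)) (v : V) (O : Set (Sym2 V)) :
    SimpleGraph {p : V × V // Γ.Adj p.1 p.2} :=
  SimpleGraph.fromRel (fun x y =>
    (y.1.1 = x.1.2 ∧ y.1.2 = x.1.1) ∨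
    (x.1.1 = y.1.1 ∧ ∃ g ∈ G, g x.1.1 = v ∧ s(g x.1.2, g y.1.2) ∈ O))

/-- The orbital graph `(Γ(v), O)`: vertex set is the neighborhood of `v`, edge set `O`. -/
def orbitalGraph (Γ : SimpleGraph V) (v : V) (O : Set (Sym2 V)) :
    SimpleGraph (Γ.neighborSet v) :=
  SimpleGraph.fromRel (fun a b => s((a : V), (b : V)) ∈ O)

/-- The lift of an automorphism `g` of `Γ` to a permutation of the darts of `Γ`,
`(u,w) ↦ (u^g, w^g)`. -/
def liftPerm (Γ : SimpleGraph V) (g : Equiv.Perm V) (hg : IsAut Γ g) :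
    Equiv.Perm {p : V × V // Γ.Adj p.1 p.2} :=
  Equiv.Perm.subtypePerm (Equiv.prodCongr g g) (fun x => hg x.1 x.2)

lemma liftPerm_val (Γ : SimpleGraph V) (g : Equiv.Perm V) (hg : IsAut Γ g)
    (x : {p : V × V // Γ.Adj p.1 p.2}) :
    ((liftPerm Γ g hg x) : V × V) = (g x.1.1, g x.1.2) := rfl

lemma lift_mono (Γ : SimpleGraph V) (G K : Subgroup (Equiv.Perm V)) (v : V) (O : Set (Sym2 V))
    (hGtrans : ∀ a b : V, ∃ g ∈ G, g a = b) (hGK : G ≤ K)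
    (hcond : ∀ p ∈ O, ∀ k ∈ K, k v = v → p.map ⇑k ∈ O)
    (g : Equiv.Perm V) (hgK : g ∈ K) (hg : IsAut Γ g) :
    ∀ x y, (truncT Γ (↑G) v O).Adj x y →
      (truncT Γ (↑G) v O).Adj (liftPerm Γ g hg x) (liftPerm Γ g hg y) := by
  rintro ⟨⟨a, b⟩, hab⟩ ⟨⟨c, d⟩, hcd⟩ ⟨hne, hR⟩
  refine ⟨?_, ?_⟩
  · intro h
    apply hne
    have h' := Subtype.ext_iff.mp h
    simp only [liftPerm_val, Equiv.Perm.subtypePerm_apply, Equiv.prodCongr_apply, Prod.map] at h'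
    apply Subtype.ext
    have h1 : g a = g c := congrArg Prod.fst h'
    have h2 : g b = g d := congrArg Prod.snd h'
    exact Prod.ext (g.injective h1) (g.injective h2)
  · -- the relation part
    have key : ∀ (a b c d : V) (hab : Γ.Adj a b) (hcd : Γ.Adj c d),
        (a = c ∧ ∃ h ∈ (↑G : Set (Equiv.Perm V)), h a = v ∧ s(h b, h d) ∈ O) →
        (g a = g c ∧ ∃ h ∈ (↑G : Set (Equiv.Perm V)), h (g a) = v ∧ s(h (g b), h (g d)) ∈ O) := by
      rintro a b c d hab hcd ⟨rfl, h, hhG, hha, hO⟩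
      refine ⟨rfl, ?_⟩
      obtain ⟨h₀, hh₀G, hh₀⟩ := hGtrans (g a) v
      refine ⟨h₀, hh₀G, hh₀, ?_⟩
      have hinv : h⁻¹ v = a := by rw [← hha]; simp
      have hk : (h₀ * g * h⁻¹) ∈ K := mul_mem (mul_mem (hGK hh₀G) hgK) (inv_mem (hGK hhG))
      have hkv : (h₀ * g * h⁻¹) v = v := by
        simp only [Equiv.Perm.mul_apply, hinv, hh₀]
      have := hcond _ hO _ hk hkv
      have e1 : (h₀ * g * h⁻¹) (h b) = h₀ (g b) := by
        simp only [Equiv.Perm.mul_apply]; rw [Equiv.Perm.inv_def, Equiv.symm_apply_apply]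
      have e2 : (h₀ * g * h⁻¹) (h d) = h₀ (g d) := by
        simp only [Equiv.Perm.mul_apply]; rw [Equiv.Perm.inv_def, Equiv.symm_apply_apply]
      rwa [Sym2.map_pair_eq, e1, e2] at this
    simp only [liftPerm_val, Equiv.Perm.subtypePerm_apply, Equiv.prodCongr_apply, Prod.map]
    rcases hR with (⟨h1, h2⟩ | hred) | (⟨h1, h2⟩ | hred)
    · exact Or.inl (Or.inl ⟨congrArg g h1, congrArg g h2⟩)
    · exact Or.inl (Or.inr (key a b c d hab hcd hred))
    · exact Or.inr (Or.inl ⟨congrArg g h1, congrArg g h2⟩)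
    · exact Or.inr (Or.inr (key c d a b hcd hab hred))

lemma lift_isAut (Γ : SimpleGraph V) (G K : Subgroup (Equiv.Perm V)) (v : V) (O : Set (Sym2 V))
    (hGtrans : ∀ a b : V, ∃ g ∈ G, g a = b) (hGK : G ≤ K)
    (hcond : ∀ p ∈ O, ∀ k ∈ K, k v = v → p.map ⇑k ∈ O)
    (g : Equiv.Perm V) (hgK : g ∈ K) (hg : IsAut Γ g) (hg' : IsAut Γ g⁻¹) :
    IsAut (truncT Γ (↑G) v O) (liftPerm Γ g hg) := by
  intro x y
  constructor
  · intro h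
    have h2 := lift_mono Γ G K v O hGtrans hGK hcond g⁻¹ (inv_mem hgK) hg' _ _ h
    have e : ∀ z, liftPerm Γ g⁻¹ hg' (liftPerm Γ g hg z) = z := by
      intro z
      apply Subtype.ext
      simp [liftPerm_val, Prod.ext_iff]
    rwa [e, e] at h2
  · exact lift_mono Γ G K v O hGtrans hGK hcond g hgK hg x y

/-- A subgroup `K ≤ Aut(Γ)` containing `G` lifts to
`Aut(T(Γ,G;O_v))` — i.e. for every `g ∈ K` the permutation `(u,w) ↦ (u^g, w^g)` of the
darts is an automorphism of `T(Γ,G;O_v)` — if and only if `O_v` is a union of orbits of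
the induced action of `K_v` on the `2`-subsets of `Γ(v)`. In particular, `G` itself
lifts to `Aut(T(Γ,G;O_v))`. -/
theorem stmt10 {V : Type*} [Fintype V] [DecidableEq V]
    (Γ : SimpleGraph V) (G : Subgroup (Equiv.Perm V)) (v : V) (O : Set (Sym2 V))
    (hGaut : ∀ g ∈ G, IsAut Γ g)
    (hGtrans : ∀ a b : V, ∃ g ∈ G, g a = b)
    (hOsub : ∀ p ∈ O, ¬ p.IsDiag ∧ ∀ w ∈ p, Γ.Adj v w)
    (hOinv : ∀ p ∈ O, ∀ g ∈ G, g v = v → p.map ⇑g ∈ O)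
    (K : Subgroup (Equiv.Perm V)) (hK : ∀ g ∈ K, IsAut Γ g) (hGK : G ≤ K) :
    ((∀ g (hgK : g ∈ K), IsAut (truncT Γ (↑G) v O) (liftPerm Γ g (hK g hgK))) ↔
      (∀ p ∈ O, ∀ g ∈ K, g v = v → p.map ⇑g ∈ O)) ∧
    (∀ g (hgG : g ∈ G), IsAut (truncT Γ (↑G) v O) (liftPerm Γ g (hK g (hGK hgG)))) := by
  constructor
  · constructor
    · -- lifting implies O is K_v-invariant
      intro hlift p hp g hgK hgv
      revert hp
      refine Sym2.ind (fun w w' hp => ?_) p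
      obtain ⟨hdiag, hmem⟩ := hOsub _ hp
      have hvw : Γ.Adj v w := hmem w (Sym2.mem_mk_left w w')
      have hvw' : Γ.Adj v w' := hmem w' (Sym2.mem_mk_right w w')
      have hww' : w ≠ w' := by
        intro h; exact hdiag (by rw [h]; exact Sym2.mk_isDiag_iff.mpr rfl)
      set x : {p : V × V // Γ.Adj p.1 p.2} := ⟨(v, w), hvw⟩
      set y : {p : V × V // Γ.Adj p.1 p.2} := ⟨(v, w'), hvw'⟩
      have hxy : (truncT Γ (↑G) v O).Adj x y := by
        refine ⟨?_, Or.inl (Or.inr ⟨rfl, 1, one_mem _, ?_, ?_⟩)⟩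
        · intro h
          exact hww' (congrArg Prod.snd (Subtype.ext_iff.mp h))
        · rfl
        · simpa using hp
      have hadj := (hlift g hgK x y).mpr hxy
      obtain ⟨-, hR⟩ := hadj
      simp only [liftPerm_val, Equiv.Perm.subtypePerm_apply, Equiv.prodCongr_apply, Prod.map,
        x, y] at hR
      rw [Sym2.map_pair_eq]
      rcases hR with (⟨h1, h2⟩ | ⟨-, h, hhG, hhv, hO'⟩) | (⟨h1, h2⟩ | ⟨-, h, hhG, hhv, hO'⟩)
      · exact absurd (g.injective h1) hvw.ne
      · rw [hgv] at hhv
        have := hOinv _ hO' h⁻¹ (inv_mem hhG) (by nth_rewrite 1 [← hhv]; simp)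
        simpa using this
      · exact absurd (g.injective h1) hvw'.ne
      · rw [hgv] at hhv
        have := hOinv _ hO' h⁻¹ (inv_mem hhG) (by nth_rewrite 1 [← hhv]; simp)
        rw [Sym2.eq_swap]
        simpa using this
    · -- invariance implies lifting
      intro hcond g hgK
      exact lift_isAut Γ G K v O hGtrans hGK hcond g hgK _ (hK g⁻¹ (inv_mem hgK))
  · intro g hgG
    exact lift_isAut Γ G G v O hGtrans le_rfl hOinv g hgG _ (hGaut g⁻¹ (inv_mem hgG))
end

section
/- Let Γ, G, v, O_v and T(Γ,G;O_v) be as in the construction. An automorphism h ∈ Aut(Γ) lifts to Aut(T(Γ,G;O_v)) (that is, the permutation (u,w) ↦ (u^h,w^h) of the vertex set of T(Γ,G;O_v) is an automorphism of T(Γ,G;O_v)) if and only if O_v is a union of orbits of the induced action of the stabilizer ⟨G,h⟩_v of v in the subgroup generated by G and h, acting on the 2-element subsets of Γ(v). -/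
open SimpleGraph

variable {V : Type*}

section Aux

variable (G : Subgroup (Equiv.Perm V)) (v : V) (O : Set (Sym2 V))

/-- The red relation: `(u,w)` and `(u,w')` are red-adjacent. -/
def Rr (u w w' : V) : Prop := ∃ g ∈ G, g u = v ∧ s(g w, g w') ∈ O

variable {G v O}

lemma Rr_symm {u w w'} (hr : Rr G v O u w w') : Rr G v O u w' w := by
  obtain ⟨g, hg, h1, h2⟩ := hr
  exact ⟨g, hg, h1, by rwa [Sym2.eq_swap]⟩

lemma Rr_G {g} (hg : g ∈ G) (u w w') :
    Rr G v O (g u) (g w) (g w') ↔ Rr G v O u w w' := by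
  constructor
  · rintro ⟨k, hk, h1, h2⟩
    exact ⟨k * g, mul_mem hk hg, by simpa using h1, by simpa using h2⟩
  · rintro ⟨k, hk, h1, h2⟩
    exact ⟨k * g⁻¹, mul_mem hk (inv_mem hg), by simpa using h1, by simpa using h2⟩

lemma truncT_adj_same (Γ : SimpleGraph V) {u w w' : V}
    (hw : Γ.Adj u w) (hw' : Γ.Adj u w') (hne : w ≠ w') :
    (truncT Γ (↑G) v O).Adj ⟨(u, w), hw⟩ ⟨(u, w'), hw'⟩ ↔ Rr G v O u w w' := by
  simp only [truncT, fromRel_adj]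
  constructor
  · rintro ⟨-, (⟨h1, -⟩ | ⟨-, g, hg, h1, h2⟩) | (⟨h1, -⟩ | ⟨-, g, hg, h1, h2⟩)⟩
    · exact absurd h1 hw.ne
    · exact ⟨g, hg, h1, h2⟩
    · exact absurd h1 hw'.ne
    · exact Rr_symm ⟨g, hg, h1, h2⟩
  · rintro ⟨g, hg, h1, h2⟩
    refine ⟨fun he => hne (congrArg (fun z => z.1.2) he), Or.inl (Or.inr ⟨trivial, g, hg, h1, h2⟩)⟩

end Aux

/-- An automorphism `h` of `Γ` lifts to `Aut(T(Γ,G;O_v))` — i.e. the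
permutation `(u,w) ↦ (u^h, w^h)` of the darts is an automorphism of `T(Γ,G;O_v)` — if and
only if `O_v` is a union of orbits of the induced action of the stabilizer of `v` in
`⟨G, h⟩` on the `2`-subsets of `Γ(v)`. -/
theorem stmt11 {V : Type*} [Fintype V] [DecidableEq V]
    (Γ : SimpleGraph V) (G : Subgroup (Equiv.Perm V)) (v : V) (O : Set (Sym2 V))
    (hGaut : ∀ g ∈ G, IsAut Γ g)
    (hGtrans : ∀ a b : V, ∃ g ∈ G, g a = b)
    (hOsub : ∀ p ∈ O, ¬ p.IsDiag ∧ ∀ w ∈ p, Γ.Adj v w)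
    (hOinv : ∀ p ∈ O, ∀ g ∈ G, g v = v → p.map ⇑g ∈ O)
    (h : Equiv.Perm V) (hh : IsAut Γ h) :
    IsAut (truncT Γ (↑G) v O) (liftPerm Γ h hh) ↔
      (∀ p ∈ O, ∀ g ∈ Subgroup.closure ((↑G : Set (Equiv.Perm V)) ∪ {h}),
        g v = v → p.map ⇑g ∈ O) := by
  constructor
  · -- forward
    intro hA
    -- key property of h extracted from hA
    have hΦh : ∀ u w w', Γ.Adj u w → Γ.Adj u w' → w ≠ w' →
        (Rr G v O (h u) (h w) (h w') ↔ Rr G v O u w w') := by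
      intro u w w' hw hw' hne
      have := hA ⟨(u, w), hw⟩ ⟨(u, w'), hw'⟩
      rwa [show liftPerm Γ h hh ⟨(u, w), hw⟩ = ⟨(h u, h w), (hh u w).mpr hw⟩ from rfl,
        show liftPerm Γ h hh ⟨(u, w'), hw'⟩ = ⟨(h u, h w'), (hh u w').mpr hw'⟩ from rfl,
        truncT_adj_same Γ ((hh u w).mpr hw) ((hh u w').mpr hw') (h.injective.ne hne),
        truncT_adj_same Γ hw hw' hne] at this
    -- the multiplicative predicate
    set Φ : Equiv.Perm V → Prop := fun g => IsAut Γ g ∧ ∀ u w w', Γ.Adj u w → Γ.Adj u w' →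
      w ≠ w' → (Rr G v O (g u) (g w) (g w') ↔ Rr G v O u w w') with hΦdef
    have hΦ : ∀ g ∈ Subgroup.closure ((↑G : Set (Equiv.Perm V)) ∪ {h}), Φ g := by
      intro g hg
      induction hg using Subgroup.closure_induction with
      | mem x hx =>
        rcases hx with hx | hx
        · exact ⟨hGaut x hx, fun u w w' _ _ _ => Rr_G hx u w w'⟩
        · rcases hx with rfl
          exact ⟨hh, hΦh⟩
      | one => exact ⟨fun a b => by simp, fun u w w' _ _ _ => by simp⟩
      | mul a b ha hb pa pb =>
        refine ⟨fun x y => by rw [show (a * b) x = a (b x) from rfl,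
            show (a * b) y = a (b y) from rfl, pa.1, pb.1], ?_⟩
        intro u w w' hw hw' hne
        rw [show (a * b) u = a (b u) from rfl, show (a * b) w = a (b w) from rfl,
          show (a * b) w' = a (b w') from rfl,
          pa.2 (b u) (b w) (b w') ((pb.1 u w).mpr hw) ((pb.1 u w').mpr hw') (b.injective.ne hne),
          pb.2 u w w' hw hw' hne]
      | inv a ha pa =>
        have haut : IsAut Γ a⁻¹ := by
          intro x y
          have := pa.1 (a⁻¹ x) (a⁻¹ y)
          simpa using this.symm
        refine ⟨haut, ?_⟩
        intro u w w' hw hw' hne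
        have := pa.2 (a⁻¹ u) (a⁻¹ w) (a⁻¹ w') ((haut u w).mpr hw) ((haut u w').mpr hw')
          (a⁻¹.injective.ne hne)
        simpa using this.symm
    intro p hp g hgcl hgv
    induction p using Sym2.ind with
    | _ w w' =>
      obtain ⟨hd, hadj⟩ := hOsub _ hp
      have hne : w ≠ w' := by simpa using hd
      have hw : Γ.Adj v w := hadj w (Sym2.mem_mk_left w w')
      have hw' : Γ.Adj v w' := hadj w' (Sym2.mem_mk_right w w')
      have hR : Rr G v O v w w' := ⟨1, one_mem G, by simp, by simpa using hp⟩
      have := ((hΦ g hgcl).2 v w w' hw hw' hne)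
      rw [hgv] at this
      obtain ⟨k, hk, hkv, hO'⟩ := this.mpr hR
      have hkinv : k⁻¹ v = v := by conv_lhs => rw [← hkv]; · simp
      have := hOinv _ hO' k⁻¹ (inv_mem hk) hkinv
      simpa using this
  · -- backward
    intro hP
    have key : ∀ u w w', Rr G v O (h u) (h w) (h w') ↔ Rr G v O u w w' := by
      intro u w w'
      constructor
      · rintro ⟨k, hk, hkv, hO'⟩
        obtain ⟨g₀, hg₀, hg₀u⟩ := hGtrans u v
        set e : Equiv.Perm V := g₀ * h⁻¹ * k⁻¹ with he
        have hecl : e ∈ Subgroup.closure ((↑G : Set (Equiv.Perm V)) ∪ {h}) := by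
          refine mul_mem (mul_mem ?_ (inv_mem ?_)) (inv_mem ?_)
          · exact Subgroup.subset_closure (Or.inl hg₀)
          · exact Subgroup.subset_closure (Or.inr rfl)
          · exact Subgroup.subset_closure (Or.inl hk)
        have hev : e v = v := by
          rw [he]
          simp only [Equiv.Perm.mul_apply]
          conv_lhs => rw [← hkv]
          simp [hg₀u]
        have := hP _ hO' e hecl hev
        rw [he] at this
        simp only [Sym2.map_pair_eq, Equiv.Perm.mul_apply] at this
        simp only [Equiv.Perm.inv_def, Equiv.symm_apply_apply] at this
        exact ⟨g₀, hg₀, hg₀u, this⟩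
      · rintro ⟨k, hk, hkv, hO'⟩
        obtain ⟨g₀, hg₀, hg₀u⟩ := hGtrans (h u) v
        set e : Equiv.Perm V := g₀ * h * k⁻¹ with he
        have hecl : e ∈ Subgroup.closure ((↑G : Set (Equiv.Perm V)) ∪ {h}) := by
          refine mul_mem (mul_mem ?_ ?_) (inv_mem ?_)
          · exact Subgroup.subset_closure (Or.inl hg₀)
          · exact Subgroup.subset_closure (Or.inr rfl)
          · exact Subgroup.subset_closure (Or.inl hk)
        have hev : e v = v := by
          rw [he]
          simp only [Equiv.Perm.mul_apply]
          conv_lhs => rw [← hkv]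
          simp [hg₀u]
        have := hP _ hO' e hecl hev
        rw [he] at this
        simp only [Sym2.map_pair_eq, Equiv.Perm.mul_apply] at this
        simp only [Equiv.Perm.inv_def, Equiv.symm_apply_apply] at this
        exact ⟨g₀, hg₀, hg₀u, this⟩
    rintro ⟨⟨u, w⟩, hx⟩ ⟨⟨u', w'⟩, hy⟩
    rw [show liftPerm Γ h hh ⟨(u, w), hx⟩ = ⟨(h u, h w), (hh u w).mpr hx⟩ from rfl,
      show liftPerm Γ h hh ⟨(u', w'), hy⟩ = ⟨(h u', h w'), (hh u' w').mpr hy⟩ from rfl]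
    simp only [truncT, fromRel_adj]
    constructor
    · rintro ⟨hne, hrel⟩
      refine ⟨fun he => hne (congrArg (fun z => liftPerm Γ h hh z) he), ?_⟩
      rcases hrel with (⟨h1, h2⟩ | ⟨h1, g, hg, h2, h3⟩) | (⟨h1, h2⟩ | ⟨h1, g, hg, h2, h3⟩)
      · exact Or.inl (Or.inl ⟨h.injective h1, h.injective h2⟩)
      · refine Or.inl (Or.inr ⟨h.injective h1, ?_⟩)
        exact (key u w w').mp ⟨g, hg, h2, h3⟩
      · exact Or.inr (Or.inl ⟨h.injective h1, h.injective h2⟩)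
      · refine Or.inr (Or.inr ⟨h.injective h1, ?_⟩)
        exact (key u' w' w).mp ⟨g, hg, h2, h3⟩
    · rintro ⟨hne, hrel⟩
      refine ⟨fun he => hne (by
        have h1 : u = u' := h.injective (congrArg (fun z => z.1.1) he)
        have h2 : w = w' := h.injective (congrArg (fun z => z.1.2) he)
        exact Subtype.ext (Prod.ext h1 h2)), ?_⟩
      rcases hrel with (⟨h1, h2⟩ | ⟨h1, g, hg, h2, h3⟩) | (⟨h1, h2⟩ | ⟨h1, g, hg, h2, h3⟩)
      · exact Or.inl (Or.inl ⟨congrArg h h1, congrArg h h2⟩)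
      · refine Or.inl (Or.inr ⟨congrArg h h1, ?_⟩)
        exact (key u w w').mpr ⟨g, hg, h2, h3⟩
      · exact Or.inr (Or.inl ⟨congrArg h h1, congrArg h h2⟩)
      · refine Or.inr (Or.inr ⟨congrArg h h1, ?_⟩)
        exact (key u' w' w).mpr ⟨g, hg, h2, h3⟩
end

section
/- Let Γ be a vertex-transitive graph possessing a vertex-transitive group G of automorphisms admitting a nontrivial imprimitivity block system 𝔅 on V(Γ), and suppose there exists a block B ∈ 𝔅 such that each vertex of B has exactly one neighbor outside B and no two vertices of B have a neighbor in the same block B' ∈ 𝔅 with B' ≠ B. Then the quotient graph Γ_𝔅 is |B|-regular, the natural induced action of G on Γ_𝔅 is faithful, and this induced action of G on Γ_𝔅 is arc-transitive. -/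
open SimpleGraph

variable {V : Type*}

/-- The quotient graph of `Γ` with respect to a partition (given as a setoid): two
blocks are adjacent iff they are distinct and contain adjacent representatives. -/
def quotG {V : Type*} (Γ : SimpleGraph V) (σ : Setoid V) : SimpleGraph (Quotient σ) :=
  SimpleGraph.fromRel (fun B B' =>
    ∃ a b : V, Quotient.mk σ a = B ∧ Quotient.mk σ b = B' ∧ Γ.Adj a b)

/-- Let `Γ` be a vertex-transitive graph with a vertex-transitive group
`G` of automorphisms admitting a nontrivial imprimitivity block system `𝔅` (encoded by a
`G`-invariant equivalence `σ`), and let `B` be a block each of whose vertices has exactly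
one neighbor outside `B`, no two vertices of `B` having neighbors in the same other
block. Then the quotient graph `Γ_𝔅` is `|B|`-regular, the natural induced action of `G`
on `Γ_𝔅` is faithful, and this induced action is arc-transitive. -/
theorem stmt13 {V : Type*} [Fintype V] [DecidableEq V]
    (Γ : SimpleGraph V) (G : Subgroup (Equiv.Perm V))
    (hGaut : ∀ g ∈ G, IsAut Γ g)
    (hGtrans : ∀ a b : V, ∃ g ∈ G, g a = b)
    (σ : Setoid V)
    (hσinv : ∀ g ∈ G, ∀ a b : V, σ.r a b → σ.r (g a) (g b))
    (hnontriv₁ : ∃ a b : V, σ.r a b ∧ a ≠ b) (hnontriv₂ : ∃ a b : V, ¬ σ.r a b)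
    (b₀ : V) (B : Set V) (hB : B = {x : V | σ.r x b₀})
    (hBout : ∀ x ∈ B, ∃! y : V, Γ.Adj x y ∧ y ∉ B)
    (hBsep : ∀ x ∈ B, ∀ x' ∈ B, x ≠ x' → ∀ y y' : V, Γ.Adj x y → Γ.Adj x' y' →
      y ∉ B → y' ∉ B → ¬ σ.r y y') :
    (∀ C : Quotient σ, ((quotG Γ σ).neighborSet C).ncard = B.ncard) ∧
    (∀ g ∈ G, (∀ a : V, Quotient.mk σ (g a) = Quotient.mk σ a) → g = 1) ∧
    (∀ C C' D D' : Quotient σ, (quotG Γ σ).Adj C C' → (quotG Γ σ).Adj D D' →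
      ∃ g ∈ G, ∀ a b : V, Quotient.mk σ a = C → Quotient.mk σ b = C' →
        Quotient.mk σ (g a) = D ∧ Quotient.mk σ (g b) = D') := by
  classical
  have hinv : ∀ g ∈ G, ∀ a b : V, σ.r (g a) (g b) ↔ σ.r a b := by
    intro g hg a b
    constructor
    · intro h
      have := hσinv g⁻¹ (inv_mem hg) _ _ h
      simpa using this
    · exact hσinv g hg a b
  have hmk : ∀ a b : V, Quotient.mk σ a = Quotient.mk σ b ↔ σ.r a b := by
    intro a b
    exact ⟨fun h => Quotient.exact h, fun h => Quotient.sound h⟩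
  have hmemB : ∀ x : V, x ∈ B ↔ σ.r x b₀ := by
    intro x; rw [hB]; exact Iff.rfl
  -- L1 : every vertex has a unique neighbor outside its own block
  have L1 : ∀ x : V, ∃! y : V, Γ.Adj x y ∧ ¬ σ.r y x := by
    intro x
    obtain ⟨g, hg, hgx⟩ := hGtrans b₀ x
    obtain ⟨y₀, ⟨hy₀adj, hy₀B⟩, hy₀u⟩ := hBout b₀ ((hmemB b₀).mpr (σ.refl b₀))
    refine ⟨g y₀, ⟨?_, ?_⟩, ?_⟩
    · rw [← hgx]; exact (hGaut g hg b₀ y₀).mpr hy₀adj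
    · intro h
      rw [← hgx] at h
      exact hy₀B ((hmemB y₀).mpr ((hinv g hg y₀ b₀).mp h))
    · rintro y ⟨hadj, hrel⟩
      have h1 : Γ.Adj b₀ (g⁻¹ y) := by
        have := (hGaut g hg b₀ (g⁻¹ y)).mp
        apply this
        simpa [hgx] using hadj
      have h2 : g⁻¹ y ∉ B := by
        intro hmem
        apply hrel
        have : σ.r (g (g⁻¹ y)) (g b₀) := hσinv g hg _ _ ((hmemB _).mp hmem)
        simpa [hgx] using this
      have := hy₀u (g⁻¹ y) ⟨h1, h2⟩
      rw [← this]; simp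
  -- L2 : separation transferred to arbitrary blocks
  have L2 : ∀ x x' : V, σ.r x x' → x ≠ x' → ∀ y y' : V, Γ.Adj x y → Γ.Adj x' y' →
      ¬ σ.r y x → ¬ σ.r y' x → ¬ σ.r y y' := by
    intro x x' hxx' hne y y' hxy hx'y' hyx hy'x hyy'
    obtain ⟨g, hg, hgx⟩ := hGtrans x b₀
    have hgxB : g x ∈ B := (hmemB _).mpr (by rw [hgx])
    have hgx'B : g x' ∈ B := (hmemB _).mpr (by
      rw [← hgx]; exact (hinv g hg x' x).mpr (σ.symm hxx'))
    have hgyB : g y ∉ B := by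
      intro h
      apply hyx
      have := (hmemB _).mp h
      rw [← hgx] at this
      exact (hinv g hg y x).mp this
    have hgy'B : g y' ∉ B := by
      intro h
      apply hy'x
      have := (hmemB _).mp h
      rw [← hgx] at this
      exact (hinv g hg y' x).mp this
    exact hBsep (g x) hgxB (g x') hgx'B (fun he => hne (g.injective he)) (g y) (g y')
      ((hGaut g hg x y).mpr hxy) ((hGaut g hg x' y').mpr hx'y')
      hgyB hgy'B ((hinv g hg y y').mpr hyy')
  -- the unique outside neighbor
  let out : V → V := fun x => (L1 x).choose
  have hout : ∀ x : V, Γ.Adj x (out x) ∧ ¬ σ.r (out x) x := fun x => (L1 x).choose_spec.1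
  have houtu : ∀ x y : V, Γ.Adj x y → ¬ σ.r y x → y = out x :=
    fun x y h1 h2 => (L1 x).choose_spec.2 y ⟨h1, h2⟩
  refine ⟨?_, ?_, ?_⟩
  · -- regularity
    intro C
    obtain ⟨c, hc⟩ := Quotient.exists_rep C
    have hc' : Quotient.mk σ c = C := hc
    set blk : Set V := {x : V | Quotient.mk σ x = C} with hblkdef
    have key : (quotG Γ σ).neighborSet C = (fun x => Quotient.mk σ (out x)) '' blk := by
      ext C'
      simp only [SimpleGraph.mem_neighborSet, quotG, SimpleGraph.fromRel_adj,
        Set.mem_image, hblkdef, Set.mem_setOf_eq]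
      constructor
      · rintro ⟨hne, h | h⟩
        · obtain ⟨a, b, ha, hb, hab⟩ := h
          have hba : ¬ σ.r b a := by
            intro hr
            apply hne
            rw [← ha, ← hb]
            exact ((hmk b a).mpr hr).symm
          have : b = out a := houtu a b hab hba
          exact ⟨a, ha, by rw [← this]; exact hb⟩
        · obtain ⟨a, b, ha, hb, hab⟩ := h
          -- here ha : ⟦a⟧ = C', hb : ⟦b⟧ = C
          have hba : ¬ σ.r a b := by
            intro hr
            apply hne
            rw [← hb, ← ha]
            exact ((hmk a b).mpr hr).symm
          have : a = out b := houtu b a hab.symm hba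
          exact ⟨b, hb, by rw [← this]; exact ha⟩
      · rintro ⟨a, ha, rfl⟩
        refine ⟨?_, Or.inl ⟨a, out a, ha, rfl, (hout a).1⟩⟩
        intro h
        exact (hout a).2 ((hmk _ _).mp (h ▸ ha.symm ▸ rfl))
    have inj : Set.InjOn (fun x => Quotient.mk σ (out x)) blk := by
      intro x hx x' hx' hf
      by_contra hne
      have hxC : Quotient.mk σ x = C := hx
      have hx'C : Quotient.mk σ x' = C := hx'
      have hxx' : σ.r x x' := (hmk x x').mp (hxC.trans hx'C.symm)
      have hrel : σ.r (out x) (out x') := (hmk _ _).mp hf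
      have hox'x : ¬ σ.r (out x') x := fun h => (hout x').2 (σ.trans h hxx')
      exact L2 x x' hxx' hne (out x) (out x') (hout x).1 (hout x').1 (hout x).2 hox'x hrel
    rw [key, Set.ncard_image_of_injOn inj]
    -- blk has same size as B
    obtain ⟨g, hg, hgc⟩ := hGtrans b₀ c
    have hblkB : blk = g '' B := by
      ext x
      simp only [hblkdef, Set.mem_setOf_eq, Set.mem_image]
      constructor
      · intro hx
        refine ⟨g⁻¹ x, (hmemB _).mpr ?_, by simp⟩
        have hrel : σ.r x c := (hmk x c).mp (hx.trans hc'.symm)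
        have : σ.r (g⁻¹ x) (g⁻¹ c) := hσinv g⁻¹ (inv_mem hg) _ _ hrel
        rwa [← hgc, Equiv.Perm.inv_def, Equiv.symm_apply_apply, ← Equiv.Perm.inv_def] at this
      · rintro ⟨y, hy, rfl⟩
        rw [← hc', hmk]
        have : σ.r (g y) (g b₀) := hσinv g hg _ _ ((hmemB y).mp hy)
        rwa [hgc] at this
    rw [hblkB, Set.ncard_image_of_injective _ g.injective]
  · -- faithfulness
    intro g hg hfix
    ext x
    simp only [Equiv.Perm.coe_one, id_eq]
    by_contra hne
    have hrel : σ.r (g x) x := (hmk _ _).mp (hfix x)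
    have hy := hout x
    have hgy : σ.r (g (out x)) (out x) := (hmk _ _).mp (hfix (out x))
    have hgyx : ¬ σ.r (g (out x)) x := fun h => hy.2 (σ.trans (σ.symm hgy) h)
    exact L2 x (g x) (σ.symm hrel) (fun h => hne h.symm) (out x) (g (out x))
      hy.1 ((hGaut g hg x (out x)).mpr hy.1) hy.2 hgyx (σ.symm hgy)
  · -- arc-transitivity
    intro C C' D D' hCC' hDD'
    simp only [quotG, SimpleGraph.fromRel_adj] at hCC' hDD'
    obtain ⟨hne1, h1⟩ := hCC'
    obtain ⟨hne2, h2⟩ := hDD'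
    obtain ⟨a, b, ha, hb, hab⟩ : ∃ a b : V, Quotient.mk σ a = C ∧ Quotient.mk σ b = C' ∧ Γ.Adj a b := by
      rcases h1 with ⟨a, b, ha, hb, hab⟩ | ⟨a, b, ha, hb, hab⟩
      · exact ⟨a, b, ha, hb, hab⟩
      · exact ⟨b, a, hb, ha, hab.symm⟩
    obtain ⟨c, d, hcD, hdD, hcd⟩ : ∃ c d : V, Quotient.mk σ c = D ∧ Quotient.mk σ d = D' ∧ Γ.Adj c d := by
      rcases h2 with ⟨c, d, hcD, hdD, hcd⟩ | ⟨c, d, hcD, hdD, hcd⟩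
      · exact ⟨c, d, hcD, hdD, hcd⟩
      · exact ⟨d, c, hdD, hcD, hcd.symm⟩
    obtain ⟨g, hg, hga⟩ := hGtrans a c
    -- g b = d
    have hgbd : g b = d := by
      have hadj : Γ.Adj c (g b) := by
        rw [← hga]; exact (hGaut g hg a b).mpr hab
      have hout1 : ¬ σ.r (g b) c := by
        rw [← hga]
        intro h
        exact hne1 (ha ▸ hb ▸ ((hmk b a).mpr ((hinv g hg b a).mp h)).symm)
      have hout2 : ¬ σ.r d c := by
        intro h
        exact hne2 (hcD ▸ hdD ▸ ((hmk d c).mpr h).symm)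
      rw [houtu c (g b) hadj hout1, houtu c d hcd hout2]
    refine ⟨g, hg, ?_⟩
    intro a' b' ha' hb'
    constructor
    · have : σ.r a' a := (hmk a' a).mp (ha'.trans ha.symm)
      rw [← hcD, ← hga, hmk]
      exact hσinv g hg _ _ this
    · have : σ.r b' b := (hmk b' b).mp (hb'.trans hb.symm)
      rw [← hdD, ← hgbd, hmk]
      exact hσinv g hg _ _ this
end

section
/- Let Γ be a vertex-transitive graph possessing a vertex-transitive group G of automorphisms admitting a nontrivial imprimitivity block system 𝔅 on V(Γ), and suppose there exists a block B ∈ 𝔅 such that each vertex of B has exactly one neighbor outside B and no two vertices of B have a neighbor in the same block B' ∈ 𝔅 with B' ≠ B. Identify G with its faithful induced action on the quotient graph Γ_𝔅, and let O_B be the set of all pairs {B_u, B_w} of blocks, where u, w ∈ B are adjacent in Γ and B_x denotes the block containing the unique neighbor of x ∈ B outside B. Then O_B is a union of orbits of the action of the stabilizer G_B on the 2-element subsets of the neighborhood of B in Γ_𝔅, the orbital graph (Γ_𝔅(B), O_B) is isomorphic to the subgraph of Γ induced on B, and Γ is isomorphic to the generalized truncation T(Γ_𝔅, G; O_B). -/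
open SimpleGraph

variable {V : Type*}

/-- In the situation of the previous theorem, identify `G` with its
faithful induced action `Ĝ` on the quotient graph `Γ_𝔅` and let `O_B` be the set of all
pairs `{B_u, B_w}` of blocks where `u, w ∈ B` are adjacent in `Γ` and `B_x` is the block
containing the unique neighbor of `x ∈ B` outside `B`. Then `O_B` is a union of orbits
of the action of the stabilizer of `B` in `Ĝ` on the `2`-subsets of the neighborhood of
`B` in `Γ_𝔅`, the orbital graph `(Γ_𝔅(B), O_B)` is isomorphic to the subgraph of `Γ`
induced on `B`, and `Γ` is isomorphic to the generalized truncation `T(Γ_𝔅, Ĝ; O_B)`. -/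
theorem stmt14 {V : Type*} [Fintype V] [DecidableEq V]
    (Γ : SimpleGraph V) (G : Subgroup (Equiv.Perm V))
    (hGaut : ∀ g ∈ G, IsAut Γ g)
    (hGtrans : ∀ a b : V, ∃ g ∈ G, g a = b)
    (σ : Setoid V)
    (hσinv : ∀ g ∈ G, ∀ a b : V, σ.r a b → σ.r (g a) (g b))
    (hnontriv₁ : ∃ a b : V, σ.r a b ∧ a ≠ b) (hnontriv₂ : ∃ a b : V, ¬ σ.r a b)
    (b₀ : V) (B : Set V) (hB : B = {x : V | σ.r x b₀})
    (hBout : ∀ x ∈ B, ∃! y : V, Γ.Adj x y ∧ y ∉ B)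
    (hBsep : ∀ x ∈ B, ∀ x' ∈ B, x ≠ x' → ∀ y y' : V, Γ.Adj x y → Γ.Adj x' y' →
      y ∉ B → y' ∉ B → ¬ σ.r y y')
    (Ghat : Set (Equiv.Perm (Quotient σ)))
    (hGhat : Ghat = {π : Equiv.Perm (Quotient σ) |
      ∃ g ∈ G, ∀ a : V, π (Quotient.mk σ a) = Quotient.mk σ (g a)})
    (OB : Set (Sym2 (Quotient σ)))
    (hOB : OB = {p : Sym2 (Quotient σ) | ∃ u w y z : V, u ∈ B ∧ w ∈ B ∧ Γ.Adj u w ∧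
      Γ.Adj u y ∧ y ∉ B ∧ Γ.Adj w z ∧ z ∉ B ∧
      p = s(Quotient.mk σ y, Quotient.mk σ z)}) :
    ((∀ p ∈ OB, ¬ p.IsDiag ∧ ∀ C ∈ p, (quotG Γ σ).Adj (Quotient.mk σ b₀) C) ∧
      (∀ p ∈ OB, ∀ π ∈ Ghat, π (Quotient.mk σ b₀) = Quotient.mk σ b₀ →
        p.map ⇑π ∈ OB)) ∧
    Nonempty ((orbitalGraph (quotG Γ σ) (Quotient.mk σ b₀) OB) ≃g (Γ.induce B)) ∧
    Nonempty (Γ ≃g truncT (quotG Γ σ) Ghat (Quotient.mk σ b₀) OB) := by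
  classical
  subst hB hGhat hOB
  -- basic setoid facts
  have hrefl : ∀ a : V, σ.r a a := fun a => σ.iseqv.refl a
  have hsymm : ∀ {a b : V}, σ.r a b → σ.r b a := fun h => σ.iseqv.symm h
  have htrans : ∀ {a b c : V}, σ.r a b → σ.r b c → σ.r a c := fun h h' => σ.iseqv.trans h h'
  have hσinv' : ∀ g ∈ G, ∀ a b : V, σ.r (g a) (g b) → σ.r a b := by
    intro g hg a b h
    have := hσinv g⁻¹ (inv_mem hg) _ _ h
    simpa using this
  -- every vertex has a unique neighbor outside its own block
  have hOut : ∀ x : V, ∃! y : V, Γ.Adj x y ∧ ¬ σ.r y x := by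
    intro x
    obtain ⟨g, hg, hgx⟩ := hGtrans x b₀
    obtain ⟨y', ⟨hadj, hout⟩, huniq⟩ := hBout b₀ (hrefl b₀)
    refine ⟨g⁻¹ y', ⟨?_, ?_⟩, ?_⟩
    · have h' : Γ.Adj (g x) (g (g⁻¹ y')) := by simpa [hgx] using hadj
      exact (hGaut g hg _ _).mp h'
    · intro h
      have := hσinv g hg _ _ h
      simp only [Equiv.Perm.inv_def, Equiv.apply_symm_apply, hgx] at this
      exact hout this
    · intro y ⟨hadjy, houty⟩
      have h1 : Γ.Adj b₀ (g y) := by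
        have := (hGaut g hg x y).mpr hadjy
        rwa [hgx] at this
      have h2 : g y ∉ {x : V | σ.r x b₀} := by
        intro hmem
        apply houty
        have : σ.r (g y) (g x) := by rwa [hgx]
        exact hσinv' g hg _ _ this
      have := huniq (g y) ⟨h1, h2⟩
      have : y = g⁻¹ y' := by rw [← this]; simp
      exact this
  obtain ⟨nb, hnbAdj, hnbOut⟩ : ∃ nb : V → V, (∀ x, Γ.Adj x (nb x)) ∧ ∀ x, ¬ σ.r (nb x) x :=
    ⟨fun x => (hOut x).exists.choose, fun x => (hOut x).exists.choose_spec.1,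
      fun x => (hOut x).exists.choose_spec.2⟩
  have hnbUniq : ∀ x y : V, Γ.Adj x y → ¬ σ.r y x → y = nb x := by
    intro x y h1 h2
    exact ((hOut x).unique ⟨h1, h2⟩ ⟨hnbAdj x, hnbOut x⟩)
  have hnbnb : ∀ x : V, nb (nb x) = x := by
    intro x
    exact (hnbUniq (nb x) x (hnbAdj x).symm (fun h => hnbOut x (hsymm h))).symm
  -- separation: distinct vertices of a common block have outside neighbors in distinct blocks
  have hSep : ∀ x x' : V, σ.r x x' → x ≠ x' → ¬ σ.r (nb x) (nb x') := by
    intro x x' hxx' hne h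
    obtain ⟨g, hg, hgx⟩ := hGtrans x b₀
    have hx'B : σ.r (g x') b₀ := by
      have := hσinv g hg _ _ (hsymm hxx'); rwa [hgx] at this
    have hgnbx : ¬ σ.r (g (nb x)) b₀ := by
      intro hmem
      exact hnbOut x (hσinv' g hg _ _ (by rwa [hgx]))
    have hgnbx' : ¬ σ.r (g (nb x')) b₀ := by
      intro hmem
      have : σ.r (g (nb x')) (g x') := htrans hmem (hsymm hx'B)
      exact hnbOut x' (hσinv' g hg _ _ this)
    have hgne : g x ≠ g x' := fun h => hne (g.injective h)
    have := hBsep (g x) (by rw [hgx]; exact hrefl b₀) (g x') hx'B hgne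
      (g (nb x)) (g (nb x')) ((hGaut g hg _ _).mpr (hnbAdj x)) ((hGaut g hg _ _).mpr (hnbAdj x'))
      hgnbx hgnbx'
    exact this (hσinv g hg _ _ h)
  -- nb for members of B
  have hnbB : ∀ x : V, σ.r x b₀ → ¬ σ.r (nb x) b₀ := by
    intro x hx h
    exact hnbOut x (htrans h (hsymm hx))
  have hnbEq : ∀ u y : V, σ.r u b₀ → Γ.Adj u y → ¬ σ.r y b₀ → y = nb u := by
    intro u y hu hadj hy
    exact hnbUniq u y hadj (fun h => hy (htrans h hu))
  -- quotient graph adjacency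
  have hQAdj : ∀ A C : Quotient σ, (quotG Γ σ).Adj A C ↔
      (A ≠ C ∧ ∃ a b : V, Quotient.mk σ a = A ∧ Quotient.mk σ b = C ∧ Γ.Adj a b) := by
    intro A C
    constructor
    · intro h
      rw [quotG, SimpleGraph.fromRel_adj] at h
      obtain ⟨hne, h | h⟩ := h
      · exact ⟨hne, h⟩
      · obtain ⟨a, b, ha, hb, hab⟩ := h
        exact ⟨hne, b, a, hb, ha, hab.symm⟩
    · rintro ⟨hne, h⟩
      rw [quotG, SimpleGraph.fromRel_adj]
      exact ⟨hne, Or.inl h⟩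
  -- construction of elements of Ghat
  have mkπ : ∀ g ∈ G, ∃ π ∈ {π : Equiv.Perm (Quotient σ) |
      ∃ g ∈ G, ∀ a : V, π (Quotient.mk σ a) = Quotient.mk σ (g a)},
      ∀ a : V, π (Quotient.mk σ a) = Quotient.mk σ (g a) := by
    intro g hg
    refine ⟨Quotient.congr (g : Equiv.Perm V)
      (fun a b => ⟨hσinv g hg a b, fun h => hσinv' g hg a b h⟩), ⟨g, hg, fun a => rfl⟩,
      fun a => rfl⟩
  refine ⟨⟨?_, ?_⟩, ⟨?_⟩, ⟨?_⟩⟩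
  · -- part 1a
    rintro p ⟨u, w, y, z, hu, hw, huw, huy, hy, hwz, hz, rfl⟩
    have hyz : ¬ σ.r y z := hBsep u hu w hw huw.ne y z huy hwz hy hz
    constructor
    · intro hdiag
      rw [Sym2.mk_isDiag_iff] at hdiag
      exact hyz (Quotient.exact hdiag)
    · intro C hC
      rw [Sym2.mem_iff] at hC
      have key : ∀ a c : V, σ.r a b₀ → Γ.Adj a c → ¬ σ.r c b₀ →
          (quotG Γ σ).Adj (Quotient.mk σ b₀) (Quotient.mk σ c) := by
        intro a c ha hac hc
        rw [hQAdj]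
        refine ⟨fun h => hc (hsymm (Quotient.exact h)), a, c, Quotient.sound ha, rfl, hac⟩
      rcases hC with rfl | rfl
      · exact key u y hu huy hy
      · exact key w z hw hwz hz
  · -- part 1b
    rintro p ⟨u, w, y, z, hu, hw, huw, huy, hy, hwz, hz, rfl⟩ π ⟨g, hg, hπ⟩ hfix
    have hgb₀ : σ.r (g b₀) b₀ := by
      rw [hπ b₀] at hfix
      exact Quotient.exact hfix
    have hmem : ∀ a : V, σ.r a b₀ → σ.r (g a) b₀ :=
      fun a ha => htrans (hσinv g hg _ _ ha) hgb₀
    have hnmem : ∀ a : V, ¬ σ.r a b₀ → ¬ σ.r (g a) b₀ := by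
      intro a ha h
      exact ha (hσinv' g hg _ _ (htrans h (hsymm hgb₀)))
    refine ⟨g u, g w, g y, g z, hmem u hu, hmem w hw, (hGaut g hg _ _).mpr huw,
      (hGaut g hg _ _).mpr huy, hnmem y hy, (hGaut g hg _ _).mpr hwz, hnmem z hz, ?_⟩
    rw [Sym2.map_pair_eq, hπ, hπ]
  · -- part 2 : orbital graph ≅ induced graph
    have hmemNb : ∀ x : ({x : V | σ.r x b₀} : Set V),
        (Quotient.mk σ (nb x) : Quotient σ) ∈ (quotG Γ σ).neighborSet (Quotient.mk σ b₀) := by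
      rintro ⟨x, hx⟩
      rw [SimpleGraph.mem_neighborSet, hQAdj]
      exact ⟨fun h => hnbB x hx (hsymm (Quotient.exact h)), x, nb x, Quotient.sound hx, rfl,
        hnbAdj x⟩
    set e : ({x : V | σ.r x b₀} : Set V) → ((quotG Γ σ).neighborSet (Quotient.mk σ b₀)) :=
      fun x => ⟨Quotient.mk σ (nb x), hmemNb x⟩ with he
    have hbij : Function.Bijective e := by
      constructor
      · rintro ⟨x, hx⟩ ⟨x', hx'⟩ hxx'
        have : σ.r (nb x) (nb x') := Quotient.exact (congrArg Subtype.val hxx')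
        by_contra hne
        exact hSep x x' (htrans hx (hsymm hx')) (fun h => hne (Subtype.ext h)) this
      · rintro ⟨C, hC⟩
        rw [SimpleGraph.mem_neighborSet, hQAdj] at hC
        obtain ⟨hne, a, b, ha, hb, hab⟩ := hC
        have haB : σ.r a b₀ := Quotient.exact ha
        have hbB : ¬ σ.r b b₀ := by
          intro h
          exact hne (ha ▸ hb ▸ (Quotient.sound (htrans haB (hsymm h))))
        refine ⟨⟨a, haB⟩, Subtype.ext ?_⟩
        show Quotient.mk σ (nb a) = C
        rw [← hnbEq a b haB hab hbB, hb]
    -- key : membership of OB characterises adjacency in B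
    have keyOB : ∀ x x' : V, σ.r x b₀ → σ.r x' b₀ →
        (s(Quotient.mk σ (nb x), Quotient.mk σ (nb x')) ∈
          {p : Sym2 (Quotient σ) | ∃ u w y z : V, u ∈ {x : V | σ.r x b₀} ∧
            w ∈ {x : V | σ.r x b₀} ∧ Γ.Adj u w ∧ Γ.Adj u y ∧ y ∉ {x : V | σ.r x b₀} ∧
            Γ.Adj w z ∧ z ∉ {x : V | σ.r x b₀} ∧
            p = s(Quotient.mk σ y, Quotient.mk σ z)} ↔ Γ.Adj x x') := by
      intro x x' hx hx'
      constructor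
      · rintro ⟨u, w, y, z, hu, hw, huw, huy, hy, hwz, hz, hp⟩
        have hy' : y = nb u := hnbEq u y hu huy hy
        have hz' : z = nb w := hnbEq w z hw hwz hz
        subst hy' hz'
        have heqB : ∀ c c' : V, σ.r c b₀ → σ.r c' b₀ →
            Quotient.mk σ (nb c) = Quotient.mk σ (nb c') → c = c' := by
          intro c c' hc hc' h
          by_contra hne
          exact hSep c c' (htrans hc (hsymm hc')) hne (Quotient.exact h)
        rw [Sym2.eq_iff] at hp
        rcases hp with ⟨h1, h2⟩ | ⟨h1, h2⟩
        · rw [heqB x u hx hu h1, heqB x' w hx' hw h2]; exact huw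
        · rw [heqB x w hx hw h1, heqB x' u hx' hu h2]; exact huw.symm
      · intro hadj
        exact ⟨x, x', nb x, nb x', hx, hx', hadj, hnbAdj x, hnbB x hx, hnbAdj x',
          hnbB x' hx', rfl⟩
    refine (SimpleGraph.Iso.symm ⟨Equiv.ofBijective e hbij, ?_⟩)
    rintro ⟨x, hx⟩ ⟨x', hx'⟩
    show (orbitalGraph (quotG Γ σ) (Quotient.mk σ b₀) _).Adj (e ⟨x, hx⟩) (e ⟨x', hx'⟩) ↔ _
    rw [orbitalGraph, SimpleGraph.fromRel_adj]
    constructor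
    · rintro ⟨hne, h | h⟩
      · exact (keyOB x x' hx hx').mp h
      · rw [Sym2.eq_swap] at h
        exact (keyOB x x' hx hx').mp h
    · intro hadj
      have hadj' : Γ.Adj x x' := hadj
      refine ⟨?_, Or.inl ((keyOB x x' hx hx').mpr hadj')⟩
      intro h
      exact hadj'.ne (congrArg Subtype.val
        (hbij.1 (Subtype.ext (congrArg Subtype.val h) : e ⟨x, hx⟩ = e ⟨x', hx'⟩)))
  · -- part 3 : Γ ≅ truncation
    have heqB : ∀ c c' : V, σ.r c b₀ → σ.r c' b₀ →
        Quotient.mk σ (nb c) = Quotient.mk σ (nb c') → c = c' := by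
      intro c c' hc hc' h
      by_contra hne
      exact hSep c c' (htrans hc (hsymm hc')) hne (Quotient.exact h)
    have hgnb : ∀ g ∈ G, ∀ a : V, g (nb a) = nb (g a) := by
      intro g hg a
      refine hnbUniq (g a) (g (nb a)) ((hGaut g hg _ _).mpr (hnbAdj a)) ?_
      intro h; exact hnbOut a (hσinv' g hg _ _ h)
    have hFadj : ∀ x : V, (quotG Γ σ).Adj (Quotient.mk σ x) (Quotient.mk σ (nb x)) := by
      intro x
      rw [hQAdj]
      exact ⟨fun h => hnbOut x (hsymm (Quotient.exact h)), x, nb x, rfl, rfl, hnbAdj x⟩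
    set F : V → {p : Quotient σ × Quotient σ // (quotG Γ σ).Adj p.1 p.2} :=
      fun x => ⟨(Quotient.mk σ x, Quotient.mk σ (nb x)), hFadj x⟩ with hF
    have hFinj : Function.Injective F := by
      intro x x' h
      have h1 : Quotient.mk σ x = Quotient.mk σ x' := congrArg (fun p => p.1.1) h
      have h2 : Quotient.mk σ (nb x) = Quotient.mk σ (nb x') := congrArg (fun p => p.1.2) h
      by_contra hne
      exact hSep x x' (Quotient.exact h1) hne (Quotient.exact h2)
    have hFbij : Function.Bijective F := by
      refine ⟨hFinj, ?_⟩
      rintro ⟨⟨C, D⟩, hadj⟩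
      rw [hQAdj] at hadj
      obtain ⟨hne, a, b, ha, hb, hab⟩ := hadj
      have hba : ¬ σ.r b a := fun h => hne (by rw [← ha, ← hb]; exact Quotient.sound (hsymm h))
      have hnba : nb a = b := (hnbUniq a b hab hba).symm
      refine ⟨a, Subtype.ext ?_⟩
      show ((Quotient.mk σ a, Quotient.mk σ (nb a)) : Quotient σ × Quotient σ) = (C, D)
      rw [hnba, ha, hb]
    have keyRel : ∀ x x' : V,
        ((Quotient.mk σ x' = Quotient.mk σ (nb x) ∧ Quotient.mk σ (nb x') = Quotient.mk σ x) ∨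
          (Quotient.mk σ x = Quotient.mk σ x' ∧ ∃ π ∈ {π : Equiv.Perm (Quotient σ) |
              ∃ g ∈ G, ∀ a : V, π (Quotient.mk σ a) = Quotient.mk σ (g a)},
            π (Quotient.mk σ x) = Quotient.mk σ b₀ ∧
            s(π (Quotient.mk σ (nb x)), π (Quotient.mk σ (nb x'))) ∈
              {p : Sym2 (Quotient σ) | ∃ u w y z : V, u ∈ {x : V | σ.r x b₀} ∧
                w ∈ {x : V | σ.r x b₀} ∧ Γ.Adj u w ∧ Γ.Adj u y ∧ y ∉ {x : V | σ.r x b₀} ∧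
                Γ.Adj w z ∧ z ∉ {x : V | σ.r x b₀} ∧
                p = s(Quotient.mk σ y, Quotient.mk σ z)})) → Γ.Adj x x' := by
      rintro x x' (⟨h1, h2⟩ | ⟨h1, π, ⟨g, hg, hπ⟩, hπx, hOBmem⟩)
      · -- blue edge
        have hxx' : x' = nb x := by
          by_contra hne
          apply hSep x' (nb x) (Quotient.exact h1) hne
          rw [hnbnb x]
          exact Quotient.exact h2
        rw [hxx']; exact hnbAdj x
      · -- red edge
        rw [hπ] at hπx
        rw [hπ, hπ] at hOBmem
        have hgxB : σ.r (g x) b₀ := Quotient.exact hπx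
        have hxx' : σ.r x x' := Quotient.exact h1
        have hgx'B : σ.r (g x') b₀ := htrans (hσinv g hg _ _ (hsymm hxx')) hgxB
        obtain ⟨u, w, y, z, hu, hw, huw, huy, hy, hwz, hz, hp⟩ := hOBmem
        have hy' : y = nb u := hnbEq u y hu huy hy
        have hz' : z = nb w := hnbEq w z hw hwz hz
        subst hy' hz'
        rw [hgnb g hg x, hgnb g hg x', Sym2.eq_iff] at hp
        rcases hp with ⟨hp1, hp2⟩ | ⟨hp1, hp2⟩
        · have e1 : g x = u := heqB (g x) u hgxB hu hp1
          have e2 : g x' = w := heqB (g x') w hgx'B hw hp2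
          exact (hGaut g hg x x').mp (by rw [e1, e2]; exact huw)
        · have e1 : g x = w := heqB (g x) w hgxB hw hp1
          have e2 : g x' = u := heqB (g x') u hgx'B hu hp2
          exact ((hGaut g hg x' x).mp (by rw [e1, e2]; exact huw)).symm
    refine ⟨Equiv.ofBijective F hFbij, ?_⟩
    intro x x'
    show (truncT (quotG Γ σ) _ (Quotient.mk σ b₀) _).Adj (F x) (F x') ↔ Γ.Adj x x'
    rw [truncT, SimpleGraph.fromRel_adj]
    simp only [hF]
    constructor
    · rintro ⟨hne, h | h⟩
      · exact keyRel x x' h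
      · exact (keyRel x' x h).symm
    · intro hadj
      refine ⟨fun h => hadj.ne (hFinj (Subtype.ext (congrArg Subtype.val h))), Or.inl ?_⟩
      by_cases hc : σ.r x' x
      · right
        refine ⟨Quotient.sound (hsymm hc), ?_⟩
        obtain ⟨g, hg, hgb⟩ := hGtrans x b₀
        obtain ⟨π, hπG, hπ⟩ := mkπ g hg
        have hgxB : σ.r (g x) b₀ := by rw [hgb]
        have hgx'B : σ.r (g x') b₀ := htrans (hσinv g hg _ _ hc) hgxB
        refine ⟨π, hπG, by rw [hπ, hgb], ?_⟩
        rw [hπ, hπ]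
        refine ⟨g x, g x', g (nb x), g (nb x'), hgxB, hgx'B,
          (hGaut g hg _ _).mpr hadj, (hGaut g hg _ _).mpr (hnbAdj x), ?_,
          (hGaut g hg _ _).mpr (hnbAdj x'), ?_, rfl⟩
        · intro h
          exact hnbOut x (hσinv' g hg _ _ (htrans h (hsymm hgxB)))
        · intro h
          exact hnbOut x' (hσinv' g hg _ _ (htrans h (hsymm hgx'B)))
      · left
        have h1 : x' = nb x := hnbUniq x x' hadj hc
        have h2 : x = nb x' := hnbUniq x' x hadj.symm (fun h => hc (hsymm h))
        exact ⟨congrArg (Quotient.mk σ) h1, congrArg (Quotient.mk σ) h2.symm⟩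
end
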